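/- Let H : ℝ → M_n(ℂ) be continuous with evolution operator U(t) solving U' = −iHU, U(0)=I. If a unitary q with q² = I satisfies q H(t)† q⁻¹ = H(t) for all t, then (U(t)†)⁻¹ = q⁻¹ U(t) q for all t ≥ 0. -/

import Mathlib

open Matrix

private lemma matmul_hasDerivAt {n : ℕ} (A B : ℝ → Matrix (Fin n) (Fin n) ℂ)
    (A' B' : Matrix (Fin n) (Fin n) ℂ) (t : ℝ)
    (hA : ∀ i j, HasDerivAt (fun s => A s i j) (A' i j) t)
    (hB : ∀ i j, HasDerivAt (fun s => B s i j) (B' i j) t) :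
    ∀ i j, HasDerivAt (fun s => (A s * B s) i j) ((A' * B t + A t * B') i j) t := by
  intro i j
  simp only [Matrix.mul_apply, Matrix.add_apply]
  rw [← Finset.sum_add_distrib]
  exact HasDerivAt.fun_sum fun k _ => ((hA i k).mul (hB k j)).congr_deriv (by ring)

/-- If the time-evolution operator `U` solves `U'(t) = -i H(t) U(t)`, `U(0) = 1`,
and a unitary involution `q` satisfies the Q symmetry (`ε_q = 1`)
`q H(t)† q⁻¹ = H(t)` for all `t`, then `(U(t)†)⁻¹ = q⁻¹ U(t) q` for `t ≥ 0`. -/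
theorem evolution_Q_symmetry (n : ℕ) (H U : ℝ → Matrix (Fin n) (Fin n) ℂ)
    (hHcont : Continuous H)
    (hODE : ∀ t : ℝ, ∀ i j : Fin n,
      HasDerivAt (fun s => U s i j) (((-Complex.I) • (H t * U t)) i j) t)
    (hU0 : U 0 = 1)
    (q : Matrix (Fin n) (Fin n) ℂ)
    (hq_unitary : qᴴ * q = 1) (hq_inv : q * q = 1)
    (hQ : ∀ t : ℝ, q * (H t)ᴴ * q⁻¹ = H t) :
    ∀ t : ℝ, 0 ≤ t → ((U t)ᴴ)⁻¹ = q⁻¹ * U t * q := by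
  have hqinv : q⁻¹ = q := Matrix.inv_eq_right_inv hq_inv
  -- derivative of conjugate transpose
  have hUdag : ∀ t i j, HasDerivAt (fun s => (U s)ᴴ i j)
      ((Complex.I • ((U t)ᴴ * (H t)ᴴ)) i j) t := by
    intro t i j
    have := (hODE t j i).star
    simp only [Matrix.conjTranspose_apply]
    convert this using 1
    · rfl
    simp [Matrix.smul_apply, Matrix.conjTranspose_apply, Matrix.mul_apply, Finset.mul_sum,
      star_sum]
    congr 1
    ext k
    ring
  -- F s = (U s)ᴴ * (q * U s * q)
  have key : ∀ t i j, HasDerivAt (fun s => ((U s)ᴴ * (q * U s * q)) i j) 0 t := by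
    intro t i j
    have h1 : ∀ i j, HasDerivAt (fun s => (q * U s) i j)
        ((q * ((-Complex.I) • (H t * U t))) i j) t := by
      have := matmul_hasDerivAt (fun _ => q) U 0 ((-Complex.I) • (H t * U t)) t
        (fun i j => hasDerivAt_const t (q i j)) (hODE t)
      simpa using this
    have h2 : ∀ i j, HasDerivAt (fun s => (q * U s * q) i j)
        ((q * ((-Complex.I) • (H t * U t)) * q) i j) t := by
      have := matmul_hasDerivAt (fun s => q * U s) (fun _ => q)
        (q * ((-Complex.I) • (H t * U t))) 0 t h1 (fun i j => hasDerivAt_const t (q i j))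
      simpa using this
    have h3 := matmul_hasDerivAt (fun s => (U s)ᴴ) (fun s => q * U s * q)
      (Complex.I • ((U t)ᴴ * (H t)ᴴ)) (q * ((-Complex.I) • (H t * U t)) * q) t
      (hUdag t) h2
    have hcomm : (H t)ᴴ * q = q * H t := by
      have := hQ t
      rw [hqinv] at this
      have h2' := congrArg (fun M => q * M) this
      rw [← h2', ← Matrix.mul_assoc, ← Matrix.mul_assoc, hq_inv, one_mul]
    have hzero : (Complex.I • ((U t)ᴴ * (H t)ᴴ)) * (q * U t * q)
        + (U t)ᴴ * (q * ((-Complex.I) • (H t * U t)) * q) = 0 := by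
      have e1 : (Complex.I • ((U t)ᴴ * (H t)ᴴ)) * (q * U t * q)
          = Complex.I • ((U t)ᴴ * (q * H t * U t * q)) := by
        rw [Matrix.smul_mul]
        congr 1
        rw [Matrix.mul_assoc ((U t)ᴴ) ]
        congr 1
        rw [← Matrix.mul_assoc, ← Matrix.mul_assoc, hcomm, Matrix.mul_assoc (q * H t),
          Matrix.mul_assoc]
      have e2 : (U t)ᴴ * (q * ((-Complex.I) • (H t * U t)) * q)
          = -(Complex.I • ((U t)ᴴ * (q * H t * U t * q))) := by
        rw [Matrix.mul_smul, Matrix.smul_mul, Matrix.mul_smul, neg_smul]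
        congr 3
        rw [← Matrix.mul_assoc]
      rw [e1, e2, add_neg_cancel]
    have := h3 i j
    rw [hzero] at this
    simpa using this
  -- entrywise constancy
  intro t _
  have hconst : ∀ i j, ((U t)ᴴ * (q * U t * q)) i j = ((U 0)ᴴ * (q * U 0 * q)) i j := by
    intro i j
    exact is_const_of_deriv_eq_zero
      (fun s => (key s i j).differentiableAt)
      (fun s => (key s i j).deriv) t 0
  have hmat : (U t)ᴴ * (q * U t * q) = 1 := by
    have : (U t)ᴴ * (q * U t * q) = (U 0)ᴴ * (q * U 0 * q) := by
      ext i j; exact hconst i j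
    rw [this, hU0]
    simp [hq_inv]
  rw [hqinv]
  exact (Matrix.inv_eq_right_inv (by rw [← Matrix.mul_assoc]; simpa [Matrix.mul_assoc] using hmat))
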